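/- Let P ⊂ ℝ^n be a reflexive lattice polytope with P = ⋂_{i=1}^d {u ∈ ℝ^n : ⟨u, v_i⟩ ≥ −1}, v_1,…,v_d ∈ ℤ^n primitive. For each coordinate i ∈ {1,…,n} fix C_i ∈ ℤ with u_i + C_i ≥ 0 on P and set P_i := {(u,h) ∈ ℝ^n × ℝ : u ∈ P, 0 ≤ h ≤ u_i + C_i}; suppose there are polynomials E and E_1,…,E_n with deg E ≤ n, deg E_i ≤ n+1, E(0) = E_i(0) = 1, E(k) = #(kP ∩ ℤ^n) and E_i(k) = #(kP_i ∩ ℤ^{n+1}) for all positive integers k. Define δ_k(P) := (max_{1≤i≤d}(⟨Bc_k(P), v_i⟩ + 1))^{−1}. If δ_k(P) = 1 for all sufficiently large positive integers k, then δ_k(P) = 1 for every positive integer k; equivalently, if Bc_k(P) = 0 for all sufficiently large k then Bc_k(P) = 0 for all positive integers k. -/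

import Mathlib

open scoped BigOperators
open MeasureTheory Polynomial Filter

noncomputable section

/-- A point of `ℝ^n` is a lattice point if all its coordinates are integers. -/
def isLatticePoint (n : ℕ) (u : Fin n → ℝ) : Prop := ∀ i, ∃ z : ℤ, u i = (z : ℝ)

/-- The set of lattice points of a subset `S ⊆ ℝ^n`. -/
def latticePts (n : ℕ) (S : Set (Fin n → ℝ)) : Set (Fin n → ℝ) :=
  {u ∈ S | isLatticePoint n u}

/-- The dilation `kS = {k • x : x ∈ S}`. -/
def dilate (n : ℕ) (k : ℕ) (S : Set (Fin n → ℝ)) : Set (Fin n → ℝ) :=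
  (fun x => (k : ℝ) • x) '' S

/-- A lattice polytope: the convex hull of a nonempty finite set of lattice points. -/
def IsLatticePolytope (n : ℕ) (P : Set (Fin n → ℝ)) : Prop :=
  ∃ V : Finset (Fin n → ℝ), V.Nonempty ∧ (∀ v ∈ V, isLatticePoint n v) ∧
    P = convexHull ℝ (V : Set (Fin n → ℝ))

/-- `P` is full-dimensional (`n`-dimensional) iff it has nonempty interior. -/
def IsFullDim (n : ℕ) (P : Set (Fin n → ℝ)) : Prop := (interior P).Nonempty

/-- The `k`-th quantized barycenter
`Bc_k(P) = (1/(k·#(kP ∩ ℤ^n))) · Σ_{u ∈ kP ∩ ℤ^n} u`. -/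
def Bck (n k : ℕ) (P : Set (Fin n → ℝ)) : Fin n → ℝ :=
  ((k : ℝ) * ((latticePts n (dilate n k P)).ncard : ℝ))⁻¹ •
    ∑ᶠ u ∈ latticePts n (dilate n k P), u

/-- The barycenter `Bc(P) = (∫_P x dx)/vol(P)`. -/
def Bc (n : ℕ) (P : Set (Fin n → ℝ)) : Fin n → ℝ :=
  fun i => (∫ x in P, x i) / (volume P).toReal

/-- `P` is reflexive w.r.t. the primitive integer vectors `v 1, …, v d`:
each `v i` has coordinates with gcd `1`, and
`P = ⋂ i {u : ⟨u, v i⟩ ≥ −1}`. -/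
def IsReflexive (n d : ℕ) (v : Fin d → Fin n → ℤ) (P : Set (Fin n → ℝ)) : Prop :=
  (∀ i, Finset.univ.gcd (v i) = 1) ∧
    P = ⋂ i, {u : Fin n → ℝ | -1 ≤ ∑ j, u j * (v i j : ℝ)}

/-- `max_{1 ≤ i ≤ d} (⟨x, v_i⟩ + 1)`, the reciprocal of the stability threshold
evaluated at the point `x`. -/
def pairingMax (n d : ℕ) (hd : 0 < d) (v : Fin d → Fin n → ℤ) (x : Fin n → ℝ) : ℝ :=
  Finset.univ.sup' ⟨⟨0, hd⟩, Finset.mem_univ _⟩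
    (fun i => (∑ j, x j * (v i j : ℝ)) + 1)

/-- The rooftop polytope over `P` with roof function `f`. -/
def rooftop (n : ℕ) (P : Set (Fin n → ℝ)) (f : (Fin n → ℝ) → ℝ) : Set (Fin (n+1) → ℝ) :=
  {w | ∃ u ∈ P, ∃ h : ℝ, 0 ≤ h ∧ h ≤ f u ∧ w = Fin.snoc u h}

open scoped Pointwise

/-! ### Auxiliary lemmas -/

def castFun (m : ℕ) (z : Fin m → ℤ) : Fin m → ℝ := fun i => (z i : ℝ)

lemma castFun_injective (m : ℕ) : Function.Injective (castFun m) := by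
  intro a b h; funext i
  have := congrFun h i; simpa [castFun] using this

lemma latticePts_eq_image (m : ℕ) (S : Set (Fin m → ℝ)) :
    latticePts m S = castFun m '' (castFun m ⁻¹' S) := by
  ext u
  constructor
  · rintro ⟨hu, hl⟩
    choose z hz using hl
    have h : u = castFun m z := funext hz
    refine ⟨z, ?_, h.symm⟩
    show castFun m z ∈ S
    rwa [← h]
  · rintro ⟨z, hz, rfl⟩
    exact ⟨hz, fun i => ⟨z i, rfl⟩⟩

lemma finite_preimage_of_bounded (m : ℕ) (S : Set (Fin m → ℝ))
    (hS : Bornology.IsBounded S) : (castFun m ⁻¹' S).Finite := by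
  obtain ⟨M, hM⟩ := isBounded_iff_forall_norm_le.1 hS
  apply Set.Finite.subset (Set.finite_Icc (fun _ : Fin m => (-⌈M⌉ : ℤ)) (fun _ => ⌈M⌉))
  intro z hz
  have hb : ∀ i, |(z i : ℝ)| ≤ M := by
    intro i
    have h1 : ‖castFun m z i‖ ≤ ‖castFun m z‖ := norm_le_pi_norm _ i
    have h2 := hM _ hz
    simpa [castFun] using h1.trans h2
  constructor <;> intro i
  · have := (abs_le.1 (hb i)).1
    have hM' : (z i : ℝ) ≥ -⌈M⌉ := le_trans (by linarith [Int.le_ceil M]) this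
    exact_mod_cast hM'
  · have := (abs_le.1 (hb i)).2
    have : (z i : ℝ) ≤ ⌈M⌉ := this.trans (Int.le_ceil M)
    exact_mod_cast this

lemma ncard_latticePts_eq (m : ℕ) (S : Set (Fin m → ℝ)) (F : Finset (Fin m → ℤ))
    (hF : (castFun m ⁻¹' S) = ↑F) : (latticePts m S).ncard = F.card := by
  rw [latticePts_eq_image, hF, Set.ncard_image_of_injective _ (castFun_injective m),
    Set.ncard_coe_finset]

lemma finsum_latticePts_eq (m : ℕ) (S : Set (Fin m → ℝ)) (F : Finset (Fin m → ℤ))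
    (hF : (castFun m ⁻¹' S) = ↑F) :
    ∑ᶠ u ∈ latticePts m S, u = ∑ z ∈ F, castFun m z := by
  rw [latticePts_eq_image, hF, ← Finset.coe_image, finsum_mem_coe_finset,
    Finset.sum_image (fun a _ b _ h => castFun_injective m h)]

lemma key_preimage (n : ℕ) (P : Set (Fin n → ℝ)) (i : Fin n) (c : ℤ) (k : ℕ) (hk : 0 < k) :
    castFun (n+1) ⁻¹' (dilate (n+1) k (rooftop n P (fun u => u i + (c:ℝ))))
      = {w : Fin (n+1) → ℤ | castFun n (Fin.init w) ∈ dilate n k P ∧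
          w (Fin.last n) ∈ Set.Icc 0 (Fin.init w i + k*c)} := by
  have hk0 : (k:ℝ) ≠ 0 := by positivity
  ext w
  simp only [Set.mem_preimage, dilate, Set.mem_image, rooftop, Set.mem_setOf_eq]
  constructor
  · rintro ⟨y, ⟨u, hu, h, hh0, hhle, rfl⟩, hky⟩
    have hsnoc : castFun (n+1) w = Fin.snoc ((k:ℝ) • u) ((k:ℝ) * h) := by
      rw [← hky]; funext j
      refine Fin.lastCases ?_ ?_ j <;> simp [Fin.snoc]
    have hinit : castFun n (Fin.init w) = (k:ℝ) • u := by
      funext j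
      have := congrFun hsnoc (Fin.castSucc j)
      simpa [castFun, Fin.init] using this
    have hlast : (w (Fin.last n) : ℝ) = (k:ℝ) * h := by
      have := congrFun hsnoc (Fin.last n)
      simpa [castFun] using this
    refine ⟨⟨u, hu, hinit.symm⟩, ?_, ?_⟩
    · have : (0:ℝ) ≤ (w (Fin.last n) : ℝ) := by rw [hlast]; positivity
      exact_mod_cast this
    · have hzi : (Fin.init w i : ℝ) = (k:ℝ) * u i := by
        have := congrFun hinit i; simpa [castFun] using this
      have : (w (Fin.last n) : ℝ) ≤ (Fin.init w i : ℝ) + (k:ℝ)*(c:ℝ) := by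
        rw [hlast, hzi]
        have := mul_le_mul_of_nonneg_left hhle (le_of_lt (by exact_mod_cast hk : (0:ℝ) < k))
        linarith [this]
      exact_mod_cast this
  · rintro ⟨⟨u, hu, hku⟩, hl0, hlle⟩
    refine ⟨Fin.snoc u ((w (Fin.last n) : ℝ) / k), ⟨u, hu, _, ?_, ?_, rfl⟩, ?_⟩
    · apply div_nonneg _ (by positivity)
      exact_mod_cast hl0
    · rw [div_le_iff₀ (by exact_mod_cast hk)]
      have hzi : (Fin.init w i : ℝ) = (k:ℝ) * u i := by
        have := congrFun hku i; simpa [castFun] using this.symm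
      have : (w (Fin.last n) : ℝ) ≤ (Fin.init w i : ℝ) + (k:ℝ)*(c:ℝ) := by exact_mod_cast hlle
      rw [hzi] at this; linarith
    · funext j
      refine Fin.lastCases ?_ ?_ j
      · simp [castFun, Fin.snoc]
        field_simp
      · intro j
        have := congrFun hku j
        simpa [castFun, Fin.snoc, Fin.init] using this

lemma count_rooftop (n : ℕ) (P : Set (Fin n → ℝ)) (i : Fin n) (c : ℤ)
    (hc : ∀ u ∈ P, 0 ≤ u i + (c:ℝ)) (k : ℕ) (hk : 0 < k)
    (Afin : Finset (Fin n → ℤ)) (hA : (castFun n ⁻¹' (dilate n k P)) = ↑Afin) :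
    ((latticePts (n+1) (dilate (n+1) k (rooftop n P (fun u => u i + (c:ℝ))))).ncard : ℝ)
      = (∑ z ∈ Afin, (z i : ℝ)) + ((k:ℝ)*(c:ℝ) + 1) * Afin.card := by
  set Bfin : Finset (Fin (n+1) → ℤ) :=
    Afin.biUnion (fun z => (Finset.Icc (0:ℤ) (z i + k*c)).image
      (fun h => (Fin.snoc z h : Fin (n+1) → ℤ))) with hBfin
  have hnonneg : ∀ z ∈ Afin, 0 ≤ z i + k*c := by
    intro z hz
    rw [← Finset.mem_coe, ← hA] at hz
    obtain ⟨u, hu, hku⟩ := hz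
    have hzi : (z i : ℝ) = (k:ℝ) * u i := by
      have := congrFun hku i; simpa [castFun] using this.symm
    have h0 : (0:ℝ) ≤ (z i : ℝ) + (k:ℝ)*(c:ℝ) := by
      rw [hzi, ← mul_add]
      exact mul_nonneg (by positivity) (hc u hu)
    exact_mod_cast h0
  have hset : castFun (n+1) ⁻¹' (dilate (n+1) k (rooftop n P (fun u => u i + (c:ℝ)))) = ↑Bfin := by
    rw [key_preimage n P i c k hk]
    ext w
    simp only [Set.mem_setOf_eq, hBfin, Finset.coe_biUnion, Set.mem_iUnion, Finset.mem_coe,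
      Finset.mem_image, Finset.mem_Icc]
    constructor
    · rintro ⟨h1, h2⟩
      refine ⟨Fin.init w, ?_, w (Fin.last n), ⟨h2.1, h2.2⟩, Fin.snoc_init_self w⟩
      rw [← Finset.mem_coe, ← hA]; exact h1
    · rintro ⟨z, hz, h, ⟨h0, hle⟩, rfl⟩
      have hiz : Fin.init (Fin.snoc z h : Fin (n+1) → ℤ) = z := by simp
      have hlz : (Fin.snoc z h : Fin (n+1) → ℤ) (Fin.last n) = h := by simp
      rw [hiz, hlz]
      refine ⟨?_, h0, hle⟩
      have : z ∈ castFun n ⁻¹' (dilate n k P) := by rw [hA]; exact hz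
      exact this
  have hcard : (latticePts (n+1) (dilate (n+1) k (rooftop n P (fun u => u i + (c:ℝ))))).ncard
      = Bfin.card := ncard_latticePts_eq _ _ _ hset
  have hdisj : ∀ z ∈ Afin, ∀ z' ∈ Afin, z ≠ z' →
      Disjoint ((Finset.Icc (0:ℤ) (z i + k*c)).image (fun h => (Fin.snoc z h : Fin (n+1) → ℤ)))
        ((Finset.Icc (0:ℤ) (z' i + k*c)).image (fun h => (Fin.snoc z' h : Fin (n+1) → ℤ))) := by
    intro z _ z' _ hne
    rw [Finset.disjoint_left]
    rintro a ha ha'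
    obtain ⟨h1, _, rfl⟩ := Finset.mem_image.1 ha
    obtain ⟨h2, _, heq⟩ := Finset.mem_image.1 ha'
    apply hne
    have := congrArg Fin.init heq
    rw [Fin.init_snoc, Fin.init_snoc] at this
    exact this.symm
  have hcard2 : Bfin.card = ∑ z ∈ Afin, (z i + k*c + 1).toNat := by
    rw [hBfin, Finset.card_biUnion hdisj]
    refine Finset.sum_congr rfl fun z _ => ?_
    rw [Finset.card_image_of_injective _ ?_, Int.card_Icc]
    · congr 1; ring
    · intro a b hab
      have := congrArg (fun w => w (Fin.last n)) hab
      simpa using this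
  have h1 : ∀ z ∈ Afin, (((z i + k*c + 1).toNat : ℕ) : ℝ) = (z i : ℝ) + ((k:ℝ)*(c:ℝ) + 1) := by
    intro z hz
    have h0 := hnonneg z hz
    have h2 : ((z i + k*c + 1).toNat : ℤ) = z i + k*c + 1 := Int.toNat_of_nonneg (by linarith)
    calc (((z i + k*c + 1).toNat : ℕ) : ℝ) = (((z i + k*c + 1).toNat : ℤ) : ℝ) := by push_cast; ring
    _ = ((z i + k*c + 1 : ℤ) : ℝ) := by rw [h2]
    _ = (z i : ℝ) + ((k:ℝ)*(c:ℝ) + 1) := by push_cast; ring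
  rw [hcard, hcard2, Nat.cast_sum, Finset.sum_congr rfl h1, Finset.sum_add_distrib,
    Finset.sum_const, nsmul_eq_mul]
  ring

lemma pairingMax_zero (n d : ℕ) (hd : 0 < d) (v : Fin d → Fin n → ℤ) :
    pairingMax n d hd v 0 = 1 := by
  simp [pairingMax]
  exact Finset.sup'_const _ _

lemma eq_zero_of_pairingMax_eq_one (n d : ℕ) (hd : 0 < d) (v : Fin d → Fin n → ℤ)
    (P : Set (Fin n → ℝ)) (hPbdd : Bornology.IsBounded P)
    (hrep : P = ⋂ i, {u : Fin n → ℝ | -1 ≤ ∑ j, u j * (v i j : ℝ)})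
    (x : Fin n → ℝ) (hx : pairingMax n d hd v x = 1) : x = 0 := by
  have hle : ∀ i, ∑ j, x j * (v i j : ℝ) ≤ 0 := by
    intro i
    have h := Finset.le_sup' (fun i => (∑ j, x j * (v i j : ℝ)) + 1) (Finset.mem_univ i)
    rw [show Finset.univ.sup' _ _ = pairingMax n d hd v x from rfl, hx] at h
    linarith
  have hmem : ∀ t : ℝ, 0 ≤ t → (-t) • x ∈ P := by
    intro t ht
    rw [hrep]
    refine Set.mem_iInter.2 fun i => ?_
    have : ∑ j, ((-t) • x) j * (v i j : ℝ) = (-t) * ∑ j, x j * (v i j : ℝ) := by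
      rw [Finset.mul_sum]
      refine Finset.sum_congr rfl fun j _ => ?_
      simp [mul_assoc]
    simp only [Set.mem_setOf_eq, this]
    nlinarith [hle i]
  obtain ⟨M, hM⟩ := isBounded_iff_forall_norm_le.1 hPbdd
  by_contra hx0
  have hnx : 0 < ‖x‖ := norm_pos_iff.2 hx0
  have hMpos : 0 ≤ M := le_trans (norm_nonneg _) (hM _ (hmem 0 le_rfl))
  have h1 := hM _ (hmem ((M+1)/‖x‖) (by positivity))
  rw [norm_smul] at h1
  have : ‖(-((M+1)/‖x‖))‖ = (M+1)/‖x‖ := by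
    rw [norm_neg, Real.norm_of_nonneg (by positivity)]
  rw [this, div_mul_cancel₀ _ (ne_of_gt hnx)] at h1
  linarith

lemma dilate_bounded (n k : ℕ) (P : Set (Fin n → ℝ)) (hP : Bornology.IsBounded P) :
    Bornology.IsBounded (dilate n k P) := by
  have : dilate n k P = (k:ℝ) • P := by
    rw [← Set.image_smul]; rfl
  rw [this]
  exact hP.smul₀ _

/-- for a reflexive lattice polytope (with Ehrhart polynomials of `P`
and of the rooftop polytopes `P_i` as hypotheses), if `δ_k(P) = 1` for all sufficiently
large `k` then `δ_k(P) = 1` for every positive integer `k`; equivalently, if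
`Bc_k(P) = 0` for all sufficiently large `k` then `Bc_k(P) = 0` for all positive `k`. -/
theorem delta_k_stabilization
    (n d : ℕ) (hd : 0 < d) (v : Fin d → Fin n → ℤ) (P : Set (Fin n → ℝ))
    (hP : IsLatticePolytope n P) (hdim : IsFullDim n P)
    (href : IsReflexive n d v P)
    (C : Fin n → ℤ) (hC : ∀ i : Fin n, ∀ u ∈ P, 0 ≤ u i + (C i : ℝ))
    (E : Polynomial ℝ) (Ei : Fin n → Polynomial ℝ)
    (hEdeg : E.natDegree ≤ n) (hEideg : ∀ i, (Ei i).natDegree ≤ n + 1)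
    (hE0 : E.eval 0 = 1) (hEi0 : ∀ i, (Ei i).eval 0 = 1)
    (hE : ∀ k : ℕ, 0 < k → E.eval (k : ℝ) = ((latticePts n (dilate n k P)).ncard : ℝ))
    (hEi : ∀ i : Fin n, ∀ k : ℕ, 0 < k →
      (Ei i).eval (k : ℝ)
        = ((latticePts (n+1)
            (dilate (n+1) k (rooftop n P (fun u => u i + (C i : ℝ))))).ncard : ℝ)) :
    ((∃ K : ℕ, ∀ k : ℕ, K ≤ k → (pairingMax n d hd v (Bck n k P))⁻¹ = 1) →
      ∀ k : ℕ, 0 < k → (pairingMax n d hd v (Bck n k P))⁻¹ = 1)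
    ∧ ((∃ K : ℕ, ∀ k : ℕ, K ≤ k → Bck n k P = 0) →
      ∀ k : ℕ, 0 < k → Bck n k P = 0) := by
  obtain ⟨V, hVne, hVlat, hPV⟩ := hP
  have hPbdd : Bornology.IsBounded P := by
    rw [hPV]; exact isBounded_convexHull.2 V.finite_toSet.isBounded
  have hfin : ∀ k : ℕ, (castFun n ⁻¹' (dilate n k P)).Finite :=
    fun k => finite_preimage_of_bounded n _ (dilate_bounded n k P hPbdd)
  set Afin : ℕ → Finset (Fin n → ℤ) := fun k => (hfin k).toFinset with hAfin
  have hA : ∀ k, (castFun n ⁻¹' (dilate n k P)) = ↑(Afin k) :=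
    fun k => ((hfin k).coe_toFinset).symm
  have hnecard : ∀ k : ℕ, 0 < k → 0 < (Afin k).card := by
    intro k hk
    obtain ⟨v0, hv0⟩ := hVne
    have hv0P : v0 ∈ P := by rw [hPV]; exact subset_convexHull ℝ _ hv0
    choose z0 hz0 using hVlat v0 hv0
    rw [Finset.card_pos]
    refine ⟨fun j => k * z0 j, ?_⟩
    rw [← Finset.mem_coe, ← hA]
    refine ⟨v0, hv0P, ?_⟩
    funext j
    show (k:ℝ) * v0 j = ((k * z0 j : ℤ) : ℝ)
    rw [hz0 j]; push_cast; ring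
  have hEcard : ∀ k : ℕ, 0 < k → E.eval (k:ℝ) = ((Afin k).card : ℝ) := by
    intro k hk
    rw [hE k hk, ncard_latticePts_eq n _ _ (hA k)]
  set Q : Fin n → Polynomial ℝ :=
    fun i => Ei i - (Polynomial.C (C i : ℝ) * Polynomial.X + 1) * E with hQ
  have hQval : ∀ i, ∀ k : ℕ, 0 < k → (Q i).eval (k:ℝ) = ∑ z ∈ Afin k, (z i : ℝ) := by
    intro i k hk
    have h1 := count_rooftop n P i (C i) (hC i) k hk (Afin k) (hA k)
    rw [← hEi i k hk] at h1
    simp only [hQ, Polynomial.eval_sub, Polynomial.eval_mul, Polynomial.eval_add,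
      Polynomial.eval_one, Polynomial.eval_C, Polynomial.eval_X, hEcard k hk, h1]
    ring
  have hBck : ∀ k : ℕ, 0 < k →
      Bck n k P = ((k:ℝ) * ((Afin k).card : ℝ))⁻¹ • (fun i => (Q i).eval (k:ℝ)) := by
    intro k hk
    rw [Bck, ncard_latticePts_eq n _ _ (hA k), finsum_latticePts_eq n _ _ (hA k)]
    congr 1
    funext i
    rw [hQval i k hk]
    simp [Finset.sum_apply, castFun]
  have hkey : (∃ K : ℕ, ∀ k : ℕ, K ≤ k → Bck n k P = 0) → ∀ k : ℕ, 0 < k → Bck n k P = 0 := by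
    rintro ⟨K, hK⟩ k hk
    have hQ0 : ∀ i, Q i = 0 := by
      intro i
      apply Polynomial.eq_zero_of_infinite_isRoot
      apply Set.infinite_of_injective_forall_mem (f := fun m : ℕ => ((K + 1 + m : ℕ) : ℝ))
      · intro a b hab
        have h' : ((K + 1 + a : ℕ) : ℝ) = ((K + 1 + b : ℕ) : ℝ) := hab
        have : (K + 1 + a : ℕ) = (K + 1 + b : ℕ) := by exact_mod_cast h'
        omega
      · intro m
        have hk' : 0 < K + 1 + m := by omega
        have hB := hK (K + 1 + m) (by omega)
        rw [hBck _ hk'] at hB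
        have hcne : ((K + 1 + m : ℕ):ℝ) * ((Afin (K + 1 + m)).card : ℝ) ≠ 0 := by
          apply mul_ne_zero
          · exact (Nat.cast_pos.2 hk').ne'
          · exact (Nat.cast_pos.2 (hnecard _ hk')).ne'
        have h2 := (smul_eq_zero.1 hB).resolve_left (inv_ne_zero hcne)
        have h3 := congrFun h2 i
        simpa [Polynomial.IsRoot] using h3
    rw [hBck k hk]
    funext i
    simp [hQ0 i]
  refine ⟨?_, hkey⟩
  rintro ⟨K, hK⟩ k hk
  have hB0 : ∃ K' : ℕ, ∀ k : ℕ, K' ≤ k → Bck n k P = 0 := by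
    refine ⟨K, fun k' hk' => ?_⟩
    exact eq_zero_of_pairingMax_eq_one n d hd v P hPbdd href.2 _ (inv_eq_one.1 (hK k' hk'))
  rw [hkey hB0 k hk, pairingMax_zero]
  norm_num
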